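/- Let 𝔽_q be a finite field and let f_1, …, f_m : 𝔽_q × 𝔽_q → ℂ be 1-bounded. Set F(x) := 𝔼_{y∈𝔽_q} ∏_{i=1}^m f_i(x, y), and for h_1, …, h_t ∈ 𝔽_q set F_{h_1,…,h_t}(x) := 𝔼_{y∈𝔽_q} ∏_{i=1}^m Δ^{(1)}_{h_1,…,h_t} f_i(x, y). Then for every integer s ≥ 2, ‖F‖_{U^s}^{2^{2s−2}} ≤ 𝔼_{h_1,…,h_{s−2}∈𝔽_q} ‖F_{h_1,…,h_{s−2}}‖_{U^2}^4. -/

import Mathlib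

open Finset Complex
set_option linter.unusedSectionVars false
set_option linter.unusedVariables false
set_option linter.unreachableTactic false
set_option linter.unusedTactic false

/-- The multiplicative difference `Δ_h f(x) = f(x+h)·conj(f(x))`. -/
noncomputable def mDiff {F : Type*} [Add F] (h : F) (f : F → ℂ) : F → ℂ :=
  fun x => f (x + h) * (starRingEnd ℂ) (f x)

/-- Iterated multiplicative difference `Δ_{h₁,…,h_s} f`. -/
noncomputable def mDiffIter {F : Type*} [Add F] : (s : ℕ) → (Fin s → F) → (F → ℂ) → (F → ℂ)
  | 0, _, f => f
  | s + 1, h, f => mDiffIter s (fun i => h i.succ) (mDiff (h 0) f)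

/-- The Gowers `U^s`-norm: `‖f‖_{U^s}^{2^s} = 𝔼_{x,h₁,…,h_s} Δ_{h₁,…,h_s} f(x)`. -/
noncomputable def gowersNorm {F : Type*} [AddCommGroup F] [Fintype F] (s : ℕ) (f : F → ℂ) : ℝ :=
  (‖(∑ h : Fin s → F, ∑ x : F, mDiffIter s h f x)
      / (Fintype.card F : ℂ) ^ (s + 1)‖) ^ (((2 : ℝ) ^ s)⁻¹)

/-- The multiplicative difference in the first variable,
`Δ⁽¹⁾_h f(x,y) = f(x+h,y)·conj(f(x,y))`. -/
noncomputable def mDiff1 {F : Type*} [Add F] (h : F) (f : F → F → ℂ) : F → F → ℂ :=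
  fun x y => f (x + h) y * (starRingEnd ℂ) (f x y)

/-- Iterated multiplicative difference in the first variable `Δ⁽¹⁾_{h₁,…,h_t} f`. -/
noncomputable def mDiff1Iter {F : Type*} [Add F] :
    (t : ℕ) → (Fin t → F) → (F → F → ℂ) → (F → F → ℂ)
  | 0, _, f => f
  | t + 1, h, f => mDiff1Iter t (fun i => h i.succ) (mDiff1 (h 0) f)

section Dev
variable {X : Type} [AddCommGroup X] [Fintype X]

noncomputable def Ugen {Y : Type} [Fintype Y] (q : X → Y → ℂ) : X → ℂ := fun x => ∑ y, q x y

noncomputable def mdiff2 {Y : Type} (h : X) (q : X → Y → ℂ) : X → Y × Y → ℂ :=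
  fun x y => q (x + h) y.1 * (starRingEnd ℂ) (q x y.2)

noncomputable def mdiffd {Y : Type} (h : X) (q : X → Y → ℂ) : X → Y → ℂ :=
  fun x y => q (x + h) y * (starRingEnd ℂ) (q x y)

lemma mdiffd_eq_mDiff1 (h : X) (f : X → X → ℂ) : mdiffd h f = mDiff1 h f := rfl

def Tt : ℕ → Type → Type
  | 0, Y => Y
  | r+1, Y => Tt r (Y × Y)

instance TtFintype : ∀ (r : ℕ) (Y : Type) [i : Fintype Y], Fintype (Tt r Y)
  | 0, _, i => i
  | r+1, Y, _ => TtFintype r (Y × Y)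

lemma Tt_card : ∀ (r : ℕ) (Y : Type) [Fintype Y], Fintype.card (Tt r Y) = Fintype.card Y ^ (2 ^ r)
  | 0, Y, _ => by simp [Tt, TtFintype]
  | r+1, Y, _ => by
      show Fintype.card (Tt r (Y × Y)) = _
      rw [Tt_card r (Y × Y), Fintype.card_prod, pow_succ, pow_mul]
      ring_nf

noncomputable def cp : (r : ℕ) → (Fin r → X) → {Y : Type} → (X → Y → ℂ) → X → Tt r Y → ℂ
  | 0, _, _, q => q
  | r+1, k, _, q => cp r (fun i => k i.succ) (mdiff2 (k 0) q)

lemma mDiff_comm (h h' : X) (f : X → ℂ) : mDiff h (mDiff h' f) = mDiff h' (mDiff h f) := by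
  funext x
  simp only [mDiff, map_mul, RingHomCompTriple.comp_apply, Complex.conj_conj]
  rw [add_right_comm]
  ring

lemma mDiffIter_cons (r : ℕ) (h : X) (k : Fin r → X) (f : X → ℂ) :
    mDiffIter (r+1) (Fin.cons h k) f = mDiffIter r k (mDiff h f) := by
  simp only [mDiffIter, Fin.cons_succ, Fin.cons_zero]

lemma mDiffIter_mDiff (r : ℕ) (k : Fin r → X) (h : X) (f : X → ℂ) :
    mDiffIter r k (mDiff h f) = mDiff h (mDiffIter r k f) := by
  induction r generalizing f with
  | zero => rfl
  | succ r ih =>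
      show mDiffIter r _ (mDiff (k 0) (mDiff h f)) = mDiff h (mDiffIter r _ (mDiff (k 0) f))
      rw [mDiff_comm (k 0) h, ih]

lemma sum_pi_succ {M : Type} [AddCommMonoid M] (r : ℕ) (φ : (Fin (r+1) → X) → M) :
    ∑ k : Fin (r+1) → X, φ k = ∑ h : X, ∑ k' : Fin r → X, φ (Fin.cons h k') := by
  rw [← (Fin.consEquiv (fun _ : Fin (r+1) => X)).sum_comp φ, Fintype.sum_prod_type]
  rfl

lemma mDiff_Ugen {Y : Type} [Fintype Y] (h : X) (q : X → Y → ℂ) :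
    mDiff h (Ugen q) = Ugen (mdiff2 h q) := by
  funext x
  simp only [mDiff, Ugen, mdiff2, map_sum, Fintype.sum_prod_type, ← Finset.sum_mul,
    ← Finset.mul_sum]

lemma sum_mDiff (a : X → ℂ) :
    ∑ h : X, ∑ x : X, mDiff h a x = ((Complex.normSq (∑ x : X, a x) : ℝ) : ℂ) := by
  rw [Finset.sum_comm]
  have : ∀ x : X, ∑ h : X, mDiff h a x = (∑ u : X, a u) * (starRingEnd ℂ) (a x) := by
    intro x
    simp only [mDiff, ← Finset.sum_mul]
    congr 1
    exact Fintype.sum_equiv (Equiv.addLeft x) _ _ (fun h => rfl)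
  simp only [this]
  rw [← Finset.mul_sum, ← map_sum, Complex.mul_conj]

lemma normSq_sum_le {I : Type} [Fintype I] (u : I → ℂ) :
    Complex.normSq (∑ i, u i) ≤ (Fintype.card I : ℝ) * ∑ i, Complex.normSq (u i) := by
  have h1 : ‖∑ i, u i‖ ≤ ∑ i, ‖u i‖ := by
    simpa using norm_sum_le Finset.univ u
  have h2 : Complex.normSq (∑ i, u i) ≤ (∑ i, ‖u i‖) ^ 2 := by
    rw [← Complex.sq_norm]
    exact pow_le_pow_left₀ (norm_nonneg _) h1 2
  refine h2.trans ?_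
  have := sq_sum_le_card_mul_sum_sq (s := (Finset.univ : Finset I))
    (f := fun i => ‖u i‖)
  simp only [Complex.sq_norm, Finset.card_univ] at this
  exact_mod_cast this

/-- the unnormalized square-Gowers quantity -/
noncomputable def W (r : ℕ) (f : X → ℂ) : ℝ :=
  ∑ k : Fin r → X, Complex.normSq (∑ x : X, mDiffIter r k f x)

lemma W_nonneg (r : ℕ) (f : X → ℂ) : 0 ≤ W r f :=
  Finset.sum_nonneg fun _ _ => Complex.normSq_nonneg _

/-- S-to-W -/
lemma sum_mDiffIter_succ (r : ℕ) (f : X → ℂ) :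
    ∑ k : Fin (r+1) → X, ∑ x : X, mDiffIter (r+1) k f x = ((W r f : ℝ) : ℂ) := by
  rw [sum_pi_succ]
  have : ∀ (h : X) (k' : Fin r → X), ∑ x : X, mDiffIter (r+1) (Fin.cons h k') f x
      = ∑ x : X, mDiff h (mDiffIter r k' f) x := by
    intro h k'
    rw [mDiffIter_cons, mDiffIter_mDiff]
  simp only [this]
  rw [Finset.sum_comm, W]
  push_cast
  exact Finset.sum_congr rfl fun k' _ => sum_mDiff (mDiffIter r k' f)

/-- W cons splitting -/
lemma W_succ (r : ℕ) (f : X → ℂ) :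
    W (r+1) f = ∑ h : X, W r (mDiff h f) := by
  rw [W, sum_pi_succ]
  exact Finset.sum_congr rfl fun h _ => Finset.sum_congr rfl fun k' _ => by
    rw [mDiffIter_cons]

/-- Exp1: full multilinear expansion -/
lemma mDiffIter_Ugen : ∀ (r : ℕ) (k : Fin r → X) {Y : Type} [Fintype Y] (q : X → Y → ℂ) (x : X),
    mDiffIter r k (Ugen q) x = ∑ z : Tt r Y, cp r k q x z
  | 0, k, Y, _, q, x => rfl
  | r+1, k, Y, _, q, x => by
      show mDiffIter r (fun i => k i.succ) (mDiff (k 0) (Ugen q)) x = _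
      rw [mDiff_Ugen, mDiffIter_Ugen r (fun i => k i.succ) (mdiff2 (k 0) q) x]
      rfl

lemma mdiff2_mdiffd {Y : Type} (h h' : X) (q : X → Y → ℂ) :
    mdiff2 h (mdiffd h' q) = mdiffd h' (mdiff2 h q) := by
  funext x y
  simp only [mdiff2, mdiffd, map_mul, RingHomCompTriple.comp_apply, Complex.conj_conj]
  rw [add_right_comm]
  ring

lemma cp_mdiffd : ∀ (r : ℕ) (k : Fin r → X) {Y : Type} (h : X) (q : X → Y → ℂ) (x : X)
    (z : Tt r Y), cp r k (mdiffd h q) x z = cp r k q (x+h) z * (starRingEnd ℂ) (cp r k q x z)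
  | 0, k, Y, h, q, x, z => rfl
  | r+1, k, Y, h, q, x, z => by
      show cp r (fun i => k i.succ) (mdiff2 (k 0) (mdiffd h q)) x z = _
      rw [mdiff2_mdiffd, cp_mdiffd r (fun i => k i.succ) h (mdiff2 (k 0) q) x z]
      rfl

lemma collapse3 (f : X → X → X → ℂ) :
    ∑ h : X, ∑ x : X, ∑ x' : X, f h x x' = ∑ p : X × X × X, f p.1 p.2.1 p.2.2 := by
  simp [Fintype.sum_prod_type]

lemma claimA (a b : X → ℂ) :
    ∑ h : X, (∑ x : X, a (x+h) * (starRingEnd ℂ) (b x)) *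
        (starRingEnd ℂ) (∑ x : X, a (x+h) * (starRingEnd ℂ) (b x))
      = ∑ w : X, (∑ u : X, a u * (starRingEnd ℂ) (a (u+w))) *
          (starRingEnd ℂ) (∑ u : X, b u * (starRingEnd ℂ) (b (u+w))) := by
  have expandL : ∀ h : X, (∑ x : X, a (x+h) * (starRingEnd ℂ) (b x)) *
      (starRingEnd ℂ) (∑ x : X, a (x+h) * (starRingEnd ℂ) (b x))
      = ∑ x : X, ∑ x' : X,
          (a (x+h) * (starRingEnd ℂ) (b x)) * ((starRingEnd ℂ) (a (x'+h)) * b x') := by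
    intro h
    rw [map_sum, Finset.sum_mul_sum]
    simp [map_mul]
  have expandR : ∀ w : X, (∑ u : X, a u * (starRingEnd ℂ) (a (u+w))) *
      (starRingEnd ℂ) (∑ u : X, b u * (starRingEnd ℂ) (b (u+w)))
      = ∑ u : X, ∑ x' : X,
          (a u * (starRingEnd ℂ) (a (u+w))) * ((starRingEnd ℂ) (b x')  * b (x'+w)) := by
    intro w
    rw [map_sum, Finset.sum_mul_sum]
    simp [map_mul]
  simp only [expandL, expandR]
  rw [collapse3, collapse3]
  refine Fintype.sum_equiv ⟨fun p => (p.2.2 - p.2.1, p.2.1 + p.1, p.2.1),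
    fun p => (p.2.1 - p.2.2, p.2.2, p.1 + p.2.2), ?_, ?_⟩ _ _ ?_
  · rintro ⟨h, x, x'⟩
    refine Prod.ext ?_ (Prod.ext ?_ ?_) <;> simp <;> abel
  · rintro ⟨w, a', u⟩
    refine Prod.ext ?_ (Prod.ext ?_ ?_) <;> simp <;> abel
  · rintro ⟨h, x, x'⟩
    simp only [Equiv.coe_fn_mk]
    have e1 : x + h + (x' - x) = x' + h := by abel
    have e2 : x + (x' - x) = x' := by abel
    rw [e1, e2]
    ring

lemma claimB (a b : X → ℂ) :
    ∑ h : X, (∑ x : X, a (x+h) * (starRingEnd ℂ) (a x)) *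
        (starRingEnd ℂ) (∑ x : X, b (x+h) * (starRingEnd ℂ) (b x))
      = ∑ w : X, (∑ u : X, a u * (starRingEnd ℂ) (a (u+w))) *
          (starRingEnd ℂ) (∑ u : X, b u * (starRingEnd ℂ) (b (u+w))) := by
  have expandL : ∀ h : X, (∑ x : X, a (x+h) * (starRingEnd ℂ) (a x)) *
      (starRingEnd ℂ) (∑ x : X, b (x+h) * (starRingEnd ℂ) (b x))
      = ∑ x : X, ∑ x' : X,
          (a (x+h) * (starRingEnd ℂ) (a x)) * ((starRingEnd ℂ) (b (x'+h)) * b x') := by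
    intro h
    rw [map_sum, Finset.sum_mul_sum]
    simp [map_mul]
  have expandR : ∀ w : X, (∑ u : X, a u * (starRingEnd ℂ) (a (u+w))) *
      (starRingEnd ℂ) (∑ u : X, b u * (starRingEnd ℂ) (b (u+w)))
      = ∑ u : X, ∑ x' : X,
          (a u * (starRingEnd ℂ) (a (u+w))) * ((starRingEnd ℂ) (b x')  * b (x'+w)) := by
    intro w
    rw [map_sum, Finset.sum_mul_sum]
    simp [map_mul]
  simp only [expandL, expandR]
  rw [collapse3, collapse3]
  refine Fintype.sum_equiv ⟨fun p => (-p.1, p.2.1 + p.1, p.2.2 + p.1),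
    fun p => (-p.1, p.2.1 + p.1, p.2.2 + p.1), ?_, ?_⟩ _ _ ?_
  · rintro ⟨h, x, x'⟩
    refine Prod.ext ?_ (Prod.ext ?_ ?_) <;> simp <;> abel
  · rintro ⟨h, x, x'⟩
    refine Prod.ext ?_ (Prod.ext ?_ ?_) <;> simp <;> abel
  · rintro ⟨h, x, x'⟩
    simp only [Equiv.coe_fn_mk]
    have e1 : x + h + -h = x := by abel
    have e2 : x' + h + -h = x' := by abel
    rw [e1, e2]

lemma sum_mul_conj_sum {Z : Type} [Fintype Z] (v : Z → ℂ) :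
    (∑ z, v z) * (starRingEnd ℂ) (∑ z, v z) = ∑ p : Z × Z, v p.1 * (starRingEnd ℂ) (v p.2) := by
  rw [map_sum, Finset.sum_mul_sum, Fintype.sum_prod_type]

lemma core_eq {Z : Type} [Fintype Z] (R : Z → X → ℂ) :
    ∑ h : X, ∑ p : Z × Z,
        Complex.normSq (∑ x : X, R p.1 (x+h) * (starRingEnd ℂ) (R p.2 x))
      = ∑ h : X, Complex.normSq (∑ z : Z, ∑ x : X, R z (x+h) * (starRingEnd ℂ) (R z x)) := by
  apply Complex.ofReal_injective
  push_cast
  simp only [← Complex.mul_conj]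
  conv_lhs => rw [Finset.sum_comm]
  have hA : ∀ p : Z × Z, ∑ h : X, (∑ x : X, R p.1 (x+h) * (starRingEnd ℂ) (R p.2 x)) *
        (starRingEnd ℂ) (∑ x : X, R p.1 (x+h) * (starRingEnd ℂ) (R p.2 x))
      = ∑ w : X, (∑ u : X, R p.1 u * (starRingEnd ℂ) (R p.1 (u+w))) *
        (starRingEnd ℂ) (∑ u : X, R p.2 u * (starRingEnd ℂ) (R p.2 (u+w))) :=
    fun p => claimA (R p.1) (R p.2)
  simp only [hA]
  conv_lhs => rw [Finset.sum_comm]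
  have hB : ∀ h : X, (∑ z : Z, ∑ x : X, R z (x+h) * (starRingEnd ℂ) (R z x)) *
        (starRingEnd ℂ) (∑ z : Z, ∑ x : X, R z (x+h) * (starRingEnd ℂ) (R z x))
      = ∑ p : Z × Z, (∑ x : X, R p.1 (x+h) * (starRingEnd ℂ) (R p.1 x)) *
        (starRingEnd ℂ) (∑ x : X, R p.2 (x+h) * (starRingEnd ℂ) (R p.2 x)) :=
    fun h => sum_mul_conj_sum (fun z => ∑ x : X, R z (x+h) * (starRingEnd ℂ) (R z x))
  simp only [hB]
  conv_rhs => rw [Finset.sum_comm]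
  have hB2 : ∀ p : Z × Z, ∑ h : X, (∑ x : X, R p.1 (x+h) * (starRingEnd ℂ) (R p.1 x)) *
        (starRingEnd ℂ) (∑ x : X, R p.2 (x+h) * (starRingEnd ℂ) (R p.2 x))
      = ∑ w : X, (∑ u : X, R p.1 u * (starRingEnd ℂ) (R p.1 (u+w))) *
        (starRingEnd ℂ) (∑ u : X, R p.2 u * (starRingEnd ℂ) (R p.2 (u+w))) :=
    fun p => claimB (R p.1) (R p.2)
  simp only [hB2]
  conv_rhs => rw [Finset.sum_comm]

lemma core {Z : Type} [Fintype Z] (R : Z → X → ℂ) :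
    ∑ h : X, Complex.normSq (∑ p : Z × Z, ∑ x : X, R p.1 (x+h) * (starRingEnd ℂ) (R p.2 x))
      ≤ (Fintype.card Z : ℝ)^2 *
        ∑ h : X, Complex.normSq (∑ z : Z, ∑ x : X, R z (x+h) * (starRingEnd ℂ) (R z x)) := by
  rw [← core_eq R, Finset.mul_sum]
  refine Finset.sum_le_sum fun h _ => ?_
  have := normSq_sum_le (fun p : Z × Z => ∑ x : X, R p.1 (x+h) * (starRingEnd ℂ) (R p.2 x))
  rw [Fintype.card_prod] at this
  calc Complex.normSq (∑ p : Z × Z, ∑ x : X, R p.1 (x+h) * (starRingEnd ℂ) (R p.2 x))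
      ≤ ((Fintype.card Z * Fintype.card Z : ℕ) : ℝ) * ∑ p : Z × Z,
          Complex.normSq (∑ x : X, R p.1 (x+h) * (starRingEnd ℂ) (R p.2 x)) := this
    _ = (Fintype.card Z : ℝ)^2 * ∑ p : Z × Z,
          Complex.normSq (∑ x : X, R p.1 (x+h) * (starRingEnd ℂ) (R p.2 x)) := by
        push_cast
        ring

lemma keyineq (r : ℕ) (g : X → X → ℂ) :
    W (r+1) (Ugen g) ≤ (Fintype.card X : ℝ)^(2^(r+1)) * ∑ h : X, W r (Ugen (mdiffd h g)) := by
  have hW : W (r+1) (Ugen g) = ∑ k' : Fin r → X, ∑ h : X,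
      Complex.normSq (∑ p : Tt r X × Tt r X, ∑ x : X,
        cp r k' g (x+h) p.1 * (starRingEnd ℂ) (cp r k' g x p.2)) := by
    rw [W_succ, Finset.sum_comm]
    refine Finset.sum_congr rfl fun h _ => Finset.sum_congr rfl fun k' _ => ?_
    congr 1
    rw [mDiffIter_mDiff]
    have e1 : ∀ x : X, mDiff h (mDiffIter r k' (Ugen g)) x
        = ∑ p : Tt r X × Tt r X, cp r k' g (x+h) p.1 * (starRingEnd ℂ) (cp r k' g x p.2) := by
      intro x
      show mDiffIter r k' (Ugen g) (x+h) * (starRingEnd ℂ) (mDiffIter r k' (Ugen g) x) = _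
      rw [mDiffIter_Ugen, mDiffIter_Ugen, map_sum, Finset.sum_mul_sum, Fintype.sum_prod_type]
    simp only [e1]
    exact Finset.sum_comm
  have hV : ∀ h : X, W r (Ugen (mdiffd h g)) = ∑ k' : Fin r → X,
      Complex.normSq (∑ z : Tt r X, ∑ x : X,
        cp r k' g (x+h) z * (starRingEnd ℂ) (cp r k' g x z)) := by
    intro h
    refine Finset.sum_congr rfl fun k' _ => ?_
    congr 1
    have e1 : ∀ x : X, mDiffIter r k' (Ugen (mdiffd h g)) x
        = ∑ z : Tt r X, cp r k' g (x+h) z * (starRingEnd ℂ) (cp r k' g x z) := by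
      intro x
      rw [mDiffIter_Ugen]
      exact Finset.sum_congr rfl fun z _ => cp_mdiffd r k' h g x z
    simp only [e1]
    exact Finset.sum_comm
  have hS : ∑ h : X, W r (Ugen (mdiffd h g)) = ∑ k' : Fin r → X, ∑ h : X,
      Complex.normSq (∑ z : Tt r X, ∑ x : X,
        cp r k' g (x+h) z * (starRingEnd ℂ) (cp r k' g x z)) := by
    simp only [hV]
    exact Finset.sum_comm
  rw [hW, hS, Finset.mul_sum]
  refine Finset.sum_le_sum fun k' _ => ?_
  have hc := core (Z := Tt r X) (fun z x => cp r k' g x z)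
  have hcard : ((Fintype.card (Tt r X) : ℝ))^2 = (Fintype.card X : ℝ)^(2^(r+1)) := by
    rw [Tt_card]
    push_cast
    rw [← pow_mul, pow_succ]
  rwa [hcard] at hc

lemma mDiff1Iter_cons (t : ℕ) (h : X) (k : Fin t → X) (g : X → X → ℂ) :
    mDiff1Iter (t+1) (Fin.cons h k) g = mDiff1Iter t k (mDiff1 h g) := by
  simp only [mDiff1Iter, Fin.cons_succ, Fin.cons_zero]

lemma mainineq (t : ℕ) (g : X → X → ℂ) :
    (Fintype.card X : ℝ)^4 * W (t+1) (Ugen g)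
      ≤ (Fintype.card X : ℝ)^(2^(t+2)) * ∑ h : Fin t → X, W 1 (Ugen (mDiff1Iter t h g)) := by
  induction t generalizing g with
  | zero =>
      have : ∑ h : Fin 0 → X, W 1 (Ugen (mDiff1Iter 0 h g)) = W 1 (Ugen g) := by
        rw [Fintype.sum_subsingleton _ (fun _ : Fin 0 => (0 : X))]
        rfl
      rw [this]
      norm_num
  | succ t ih =>
      have hN4 : (0:ℝ) ≤ (Fintype.card X : ℝ)^4 := by positivity
      have hNp : (0:ℝ) ≤ (Fintype.card X : ℝ)^(2^(t+2)) := by positivity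
      calc (Fintype.card X : ℝ)^4 * W (t+2) (Ugen g)
          ≤ (Fintype.card X : ℝ)^4 * ((Fintype.card X : ℝ)^(2^(t+2)) *
              ∑ h : X, W (t+1) (Ugen (mdiffd h g))) :=
            mul_le_mul_of_nonneg_left (keyineq (t+1) g) hN4
        _ = (Fintype.card X : ℝ)^(2^(t+2)) *
              ∑ h : X, (Fintype.card X : ℝ)^4 * W (t+1) (Ugen (mdiffd h g)) := by
            rw [Finset.mul_sum]
            rw [← Finset.mul_sum, ← Finset.mul_sum]
            ring
        _ ≤ (Fintype.card X : ℝ)^(2^(t+2)) *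
              ∑ h : X, ((Fintype.card X : ℝ)^(2^(t+2)) *
                ∑ h' : Fin t → X, W 1 (Ugen (mDiff1Iter t h' (mdiffd h g)))) := by
            refine mul_le_mul_of_nonneg_left (Finset.sum_le_sum fun h _ => ?_) hNp
            exact ih (mdiffd h g)
        _ = (Fintype.card X : ℝ)^(2^(t+3)) *
              ∑ h : Fin (t+1) → X, W 1 (Ugen (mDiff1Iter (t+1) h g)) := by
            rw [sum_pi_succ t (fun h => W 1 (Ugen (mDiff1Iter (t+1) h g)))]
            have e1 : ∀ (h : X) (k : Fin t → X),
                mDiff1Iter (t+1) (Fin.cons h k) g = mDiff1Iter t k (mdiffd h g) := by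
              intro h k
              rw [mDiff1Iter_cons]
              rfl
            simp only [e1]
            rw [← Finset.mul_sum, ← mul_assoc, ← pow_add]
            have e2 : 2^(t+2) + 2^(t+2) = 2^(t+3) := by
              rw [pow_succ 2 (t+2)]
              omega
            rw [e2]
  
lemma mDiff1_prod {m : ℕ} (h : X) (f : Fin m → X → X → ℂ) :
    mDiff1 h (fun x y => ∏ i, f i x y) = fun x y => ∏ i, mDiff1 h (f i) x y := by
  funext x y
  simp [mDiff1, map_prod, Finset.prod_mul_distrib]

lemma mDiff1Iter_prod {m : ℕ} : ∀ (t : ℕ) (h : Fin t → X) (f : Fin m → X → X → ℂ),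
    mDiff1Iter t h (fun x y => ∏ i, f i x y) = fun x y => ∏ i, mDiff1Iter t h (f i) x y
  | 0, h, f => rfl
  | t+1, h, f => by
      show mDiff1Iter t (fun i => h i.succ) (mDiff1 (h 0) fun x y => ∏ i, f i x y) = _
      rw [mDiff1_prod, mDiff1Iter_prod t (fun i => h i.succ) (fun i => mDiff1 (h 0) (f i))]
      rfl

lemma mDiff_abs_le {C : ℝ} (h : X) {u : X → ℂ} (hu : ∀ x, ‖u x‖ ≤ C) (x : X) :
    ‖mDiff h u x‖ ≤ C^2 := by
  have h0 : (0:ℝ) ≤ C := le_trans (norm_nonneg _) (hu x)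
  calc ‖mDiff h u x‖ = ‖u (x+h)‖ * ‖u x‖ := by
        simp [mDiff, map_mul]
    _ ≤ C * C := mul_le_mul (hu _) (hu _) (norm_nonneg _) h0
    _ = C^2 := (sq C).symm

lemma mDiffIter_abs_le {C : ℝ} : ∀ (r : ℕ) (k : Fin r → X) {u : X → ℂ}
    (hu : ∀ x, ‖u x‖ ≤ C) (x : X),
    ‖mDiffIter r k u x‖ ≤ C^(2^r)
  | 0, k, u, hu, x => by simpa [mDiffIter] using hu x
  | r+1, k, u, hu, x => by
      have h1 : ∀ x, ‖mDiff (k 0) u x‖ ≤ C^2 := mDiff_abs_le (k 0) hu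
      have := mDiffIter_abs_le r (fun i => k i.succ) h1 x
      show ‖mDiffIter r (fun i => k i.succ) (mDiff (k 0) u) x‖ ≤ _
      calc ‖mDiffIter r (fun i => k i.succ) (mDiff (k 0) u) x‖ ≤ (C^2)^(2^r) := this
        _ = C^(2^(r+1)) := by rw [← pow_mul, pow_succ']

lemma W_le {C : ℝ} (r : ℕ) {u : X → ℂ} (h0 : 0 ≤ C) (hu : ∀ x, ‖u x‖ ≤ C) :
    W r u ≤ (Fintype.card X : ℝ)^r * ((Fintype.card X : ℝ) * C^(2^r))^2 := by
  have key : ∀ k : Fin r → X, Complex.normSq (∑ x : X, mDiffIter r k u x)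
      ≤ ((Fintype.card X : ℝ) * C^(2^r))^2 := by
    intro k
    rw [← Complex.sq_norm]
    have h1 : ‖∑ x : X, mDiffIter r k u x‖ ≤ (Fintype.card X : ℝ) * C^(2^r) := by
      calc ‖∑ x : X, mDiffIter r k u x‖ ≤ ∑ x : X, ‖mDiffIter r k u x‖ := by
            simpa using norm_sum_le Finset.univ (mDiffIter r k u)
        _ ≤ ∑ _x : X, C^(2^r) := Finset.sum_le_sum fun x _ => mDiffIter_abs_le r k hu x
        _ = (Fintype.card X : ℝ) * C^(2^r) := by
            rw [Finset.sum_const, Finset.card_univ, nsmul_eq_mul]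
    exact pow_le_pow_left₀ (norm_nonneg _) h1 2
  calc W r u ≤ ∑ _k : Fin r → X, ((Fintype.card X : ℝ) * C^(2^r))^2 :=
        Finset.sum_le_sum fun k _ => key k
    _ = (Fintype.card X : ℝ)^r * ((Fintype.card X : ℝ) * C^(2^r))^2 := by
        rw [Finset.sum_const, Finset.card_univ, nsmul_eq_mul, Fintype.card_fun,
          Fintype.card_fin]
        push_cast
        ring

lemma mDiffIter_const_mul (c : ℝ) : ∀ (r : ℕ) (k : Fin r → X) (u : X → ℂ),
    mDiffIter r k (fun x => u x * ((c:ℝ):ℂ)) = fun x => mDiffIter r k u x * ((c:ℝ):ℂ)^(2^r)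
  | 0, k, u => by
      funext x
      show u x * _ = u x * _
      norm_num
  | r+1, k, u => by
      have h1 : mDiff (k 0) (fun x => u x * ((c:ℝ):ℂ))
          = fun x => mDiff (k 0) u x * (((c^2:ℝ)):ℂ) := by
        funext x
        simp only [mDiff, map_mul, Complex.conj_ofReal]
        push_cast
        ring
      show mDiffIter r (fun i => k i.succ) (mDiff (k 0) (fun x => u x * ((c:ℝ):ℂ))) = _
      rw [h1, mDiffIter_const_mul (c^2) r (fun i => k i.succ) (mDiff (k 0) u)]
      funext x
      show mDiffIter r _ (mDiff (k 0) u) x * _ = mDiffIter r _ (mDiff (k 0) u) x * _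
      congr 1
      push_cast
      rw [← pow_mul, pow_succ']

lemma gowers_pow (r : ℕ) (u : X → ℂ) (hc : 0 < Fintype.card X) :
    gowersNorm (r+1) (fun x => u x / (Fintype.card X : ℂ)) ^ ((2:ℕ)^(r+1))
      = W r u / (Fintype.card X : ℝ)^(2^(r+1) + (r+2)) := by
  have hN : (0:ℝ) < (Fintype.card X : ℝ) := by exact_mod_cast hc
  have hfun : (fun x => u x / (Fintype.card X : ℂ))
      = fun x => u x * ((((Fintype.card X : ℝ)⁻¹ : ℝ)):ℂ) := by
    funext x
    rw [div_eq_mul_inv]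
    push_cast
    ring
  have hsum : ∑ h : Fin (r+1) → X, ∑ x : X,
        mDiffIter (r+1) h (fun x => u x * ((((Fintype.card X : ℝ)⁻¹ : ℝ)):ℂ)) x
      = ((W r u : ℝ):ℂ) * ((((Fintype.card X : ℝ)⁻¹ : ℝ)):ℂ)^(2^(r+1)) := by
    calc ∑ h : Fin (r+1) → X, ∑ x : X,
          mDiffIter (r+1) h (fun x => u x * ((((Fintype.card X : ℝ)⁻¹ : ℝ)):ℂ)) x
        = ∑ h : Fin (r+1) → X, ∑ x : X,
            mDiffIter (r+1) h u x * ((((Fintype.card X : ℝ)⁻¹ : ℝ)):ℂ)^(2^(r+1)) := by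
          simp only [mDiffIter_const_mul ((Fintype.card X : ℝ)⁻¹)]
      _ = (∑ h : Fin (r+1) → X, ∑ x : X, mDiffIter (r+1) h u x) *
            ((((Fintype.card X : ℝ)⁻¹ : ℝ)):ℂ)^(2^(r+1)) := by
          simp only [← Finset.sum_mul]
      _ = _ := by rw [sum_mDiffIter_succ]
  have habs : ‖(∑ h : Fin (r+1) → X, ∑ x : X,
        mDiffIter (r+1) h (fun x => u x / (Fintype.card X : ℂ)) x)
        / (Fintype.card X : ℂ) ^ (r+1+1)‖
      = W r u / (Fintype.card X : ℝ)^(2^(r+1) + (r+2)) := by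
    rw [hfun, hsum]
    have : ((W r u : ℝ):ℂ) * ((((Fintype.card X : ℝ)⁻¹ : ℝ)):ℂ)^(2^(r+1))
        / (Fintype.card X : ℂ) ^ (r+1+1)
        = (((W r u * ((Fintype.card X : ℝ)⁻¹)^(2^(r+1)) / (Fintype.card X : ℝ)^(r+2)) : ℝ) : ℂ) := by
      push_cast
      ring
    have h0 : 0 ≤ W r u := W_nonneg r u
    rw [this, Complex.norm_real, Real.norm_eq_abs, _root_.abs_of_nonneg (by positivity)]
    rw [pow_add]
    field_simp
    rw [one_div_pow, pow_add (Fintype.card X : ℝ) (2 ^ r * 2 ^ 1)]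
    field_simp
  unfold gowersNorm
  rw [habs]
  have hx : (0:ℝ) ≤ W r u / (Fintype.card X : ℝ)^(2^(r+1) + (r+2)) := by
    have := W_nonneg r u
    positivity
  rw [← Real.rpow_natCast ((W r u / (Fintype.card X : ℝ)^(2^(r+1) + (r+2))) ^ (((2:ℝ))^(r+1))⁻¹) ((2:ℕ)^(r+1)),
    ← Real.rpow_mul hx]
  have : ((2:ℝ)^(r+1))⁻¹ * (((2:ℕ)^(r+1) : ℕ) : ℝ) = 1 := by
    push_cast
    rw [inv_mul_cancel₀ (by positivity)]
  rw [this, Real.rpow_one]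

lemma final_aux {X : Type} [AddCommGroup X] [Fintype X] {m : ℕ}
    (f : Fin m → X → X → ℂ) (hf : ∀ i x y, ‖f i x y‖ ≤ 1)
    (t : ℕ) :
    gowersNorm (t+2) (fun x => (∑ y : X, ∏ i : Fin m, f i x y) / (Fintype.card X : ℂ))
        ^ (2 ^ (2*t+2) : ℕ)
      ≤ (∑ h : Fin t → X,
            gowersNorm 2 (fun x =>
              (∑ y : X, ∏ i : Fin m, mDiff1Iter t h (f i) x y)
                / (Fintype.card X : ℂ)) ^ (4 : ℕ))
          / (Fintype.card X : ℝ) ^ t := by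
  have hc : 0 < Fintype.card X := Fintype.card_pos
  have hN : (0:ℝ) < (Fintype.card X : ℝ) := by exact_mod_cast hc
  have hUg : (fun x => (∑ y : X, ∏ i : Fin m, f i x y) / (Fintype.card X : ℂ))
      = fun x => Ugen (fun x y => ∏ i, f i x y) x / (Fintype.card X : ℂ) := rfl
  have hUgh : ∀ h : Fin t → X,
      (fun x => (∑ y : X, ∏ i : Fin m, mDiff1Iter t h (f i) x y) / (Fintype.card X : ℂ))
      = fun x => Ugen (mDiff1Iter t h (fun x y => ∏ i, f i x y)) x / (Fintype.card X : ℂ) := by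
    intro h
    funext x
    rw [mDiff1Iter_prod]
    rfl
  have h4 : (4:ℕ) = (2:ℕ)^(1+1) := by norm_num
  simp only [hUgh, h4]
  rw [hUg]
  have hgp2 : ∀ h : Fin t → X,
      gowersNorm 2 (fun x => Ugen (mDiff1Iter t h (fun x y => ∏ i, f i x y)) x
          / (Fintype.card X : ℂ)) ^ ((2:ℕ)^(1+1))
      = W 1 (Ugen (mDiff1Iter t h (fun x y => ∏ i, f i x y)))
          / (Fintype.card X : ℝ)^7 :=
    fun h => gowers_pow 1 _ hc
  simp only [hgp2]
  have hpow : gowersNorm (t+2) (fun x => Ugen (fun x y => ∏ i, f i x y) x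
        / (Fintype.card X : ℂ)) ^ ((2:ℕ) ^ (2*t+2))
      = (gowersNorm (t+2) (fun x => Ugen (fun x y => ∏ i, f i x y) x
        / (Fintype.card X : ℂ)) ^ ((2:ℕ) ^ (t+2))) ^ ((2:ℕ)^t) := by
    rw [← pow_mul, ← pow_add]
    congr 1
    congr 1
    omega
  rw [hpow, gowers_pow (t+1) _ hc]
  set A := W (t+1) (Ugen (fun x y => ∏ i, f i x y))
      / (Fintype.card X : ℝ) ^ (2^(t+2) + (t+1+2)) with hA
  have hA0 : 0 ≤ A := by
    have := W_nonneg (t+1) (Ugen (fun x y => ∏ i, f i x y))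
    positivity
  have hUb : ∀ x, ‖Ugen (fun x y => ∏ i, f i x y) x‖ ≤ (Fintype.card X : ℝ) := by
    intro x
    calc ‖∑ y, ∏ i, f i x y‖ ≤ ∑ y, ‖∏ i, f i x y‖ := by
          simpa using norm_sum_le Finset.univ (fun y => ∏ i, f i x y)
      _ ≤ ∑ _y : X, (1:ℝ) := by
          refine Finset.sum_le_sum fun y _ => ?_
          rw [norm_prod]
          exact Finset.prod_le_one (fun i _ => norm_nonneg _) (fun i _ => hf i x y)
      _ = (Fintype.card X : ℝ) := by
          rw [Finset.sum_const, Finset.card_univ, nsmul_eq_mul, mul_one]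
  have hA1 : A ≤ 1 := by
    rw [hA, div_le_one (by positivity)]
    calc W (t+1) (Ugen (fun x y => ∏ i, f i x y))
        ≤ (Fintype.card X : ℝ)^(t+1) * ((Fintype.card X : ℝ) *
            (Fintype.card X : ℝ)^(2^(t+1)))^2 := W_le (t+1) hN.le hUb
      _ = (Fintype.card X : ℝ) ^ (2^(t+2) + (t+1+2)) := by
          rw [← pow_succ', ← pow_mul, ← pow_add]
          congr 1
          have h2 : (2:ℕ)^(t+2) = 2^(t+1) * 2 := pow_succ 2 (t+1)
          omega
  calc A ^ ((2:ℕ)^t) ≤ A ^ 1 :=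
        pow_le_pow_of_le_one hA0 hA1 (Nat.one_le_two_pow)
    _ = A := pow_one A
    _ ≤ (∑ h : Fin t → X, W 1 (Ugen (mDiff1Iter t h (fun x y => ∏ i, f i x y)))
          / (Fintype.card X : ℝ)^7) / (Fintype.card X : ℝ) ^ t := by
        rw [← Finset.sum_div, div_div, ← pow_add]
        rw [hA, div_le_div_iff₀ (by positivity) (by positivity)]
        have h3 := mul_le_mul_of_nonneg_left (mainineq t (fun x y => ∏ i, f i x y))
          (pow_nonneg hN.le (t+3))
        calc W (t+1) (Ugen (fun x y => ∏ i, f i x y)) * (Fintype.card X : ℝ)^(7+t)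
            = (Fintype.card X : ℝ)^(t+3) * ((Fintype.card X : ℝ)^4 *
                W (t+1) (Ugen (fun x y => ∏ i, f i x y))) := by
              rw [show 7+t = (t+3)+4 by omega, pow_add]
              ring
          _ ≤ (Fintype.card X : ℝ)^(t+3) * ((Fintype.card X : ℝ)^(2^(t+2)) *
                ∑ h : Fin t → X, W 1 (Ugen (mDiff1Iter t h (fun x y => ∏ i, f i x y)))) := h3
          _ = (∑ h : Fin t → X, W 1 (Ugen (mDiff1Iter t h (fun x y => ∏ i, f i x y)))) *
                (Fintype.card X : ℝ)^(2^(t+2) + (t+1+2)) := by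
              rw [pow_add, pow_add]
              ring

end Dev

/-- Lemma `cs`.  For 1-bounded `f₁,…,fₘ : 𝔽_q × 𝔽_q → ℂ`, with
`F(x) = 𝔼_y ∏ᵢ fᵢ(x,y)` and `F_{h₁,…,h_t}(x) = 𝔼_y ∏ᵢ Δ⁽¹⁾_{h₁,…,h_t} fᵢ(x,y)`,
one has `‖F‖_{U^s}^{2^{2s−2}} ≤ 𝔼_{h₁,…,h_{s−2}} ‖F_{h₁,…,h_{s−2}}‖_{U²}⁴` for `s ≥ 2`. -/
theorem statement11 (F : Type) [Field F] [Fintype F] (m : ℕ)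
    (f : Fin m → F → F → ℂ) (hf : ∀ i x y, ‖f i x y‖ ≤ 1)
    (s : ℕ) (hs : 2 ≤ s) :
    gowersNorm s (fun x => (∑ y : F, ∏ i : Fin m, f i x y) / (Fintype.card F : ℂ))
        ^ (2 ^ (2 * s - 2) : ℕ)
      ≤ (∑ h : Fin (s - 2) → F,
            gowersNorm 2 (fun x =>
              (∑ y : F, ∏ i : Fin m, mDiff1Iter (s - 2) h (f i) x y)
                / (Fintype.card F : ℂ)) ^ (4 : ℕ))
          / (Fintype.card F : ℝ) ^ (s - 2) := by
  obtain ⟨t, rfl⟩ : ∃ t, s = t + 2 := ⟨s - 2, by omega⟩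
  have hst : t + 2 - 2 = t := by omega
  have hexp : 2 * (t + 2) - 2 = 2*t+2 := by omega
  rw [hexp]
  simp only [hst]
  exact final_aux f hf t
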